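/- Bound on the unnormalized edge Laplacian block (Proposition 6.1(1)). Let G be a locally finite simple graph on a countable vertex type V, let E⃗ = {(x,y) ∈ V × V : x and y adjacent in G}, and assume every edge of G shares an endpoint with at most D_L other edges. Define B on ℓ²(E⃗) by (Bf)(x,y) = 2·f(x,y) + ∑ f(u,v), the sum over all oriented edges (u,v) whose underlying unordered edge {u,v} is different from {x,y} and shares an endpoint with {x,y}. Then B is a well-defined bounded symmetric operator on ℓ²(E⃗) with ‖B‖ ≤ 2·D_L + 2. -/

import Mathlib

open scoped InnerProductSpace ComplexConjugate

open scoped ENNReal NNReal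

set_option maxHeartbeats 1000000
set_option linter.unusedVariables false
set_option linter.unusedSectionVars false
set_option linter.deprecated false

/-- The set of oriented edges of a simple graph `G`. -/
def OrientedEdge {V : Type*} (G : SimpleGraph V) : Type _ :=
  {p : V × V // G.Adj p.1 p.2}

section
variable {V : Type*} [DecidableEq V] {G : SimpleGraph V}

def econd (G : SimpleGraph V) [DecidableEq V] (e e' : OrientedEdge G) : Prop :=
  Sym2.mk e'.1.1 e'.1.2 ≠ Sym2.mk e.1.1 e.1.2 ∧ (e.1.1 ∈ Sym2.mk e'.1.1 e'.1.2 ∨ e.1.2 ∈ Sym2.mk e'.1.1 e'.1.2)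

instance (e e' : OrientedEdge G) : Decidable (econd G e e') := by
  unfold econd; infer_instance

lemma econd_symm (e e' : OrientedEdge G) : econd G e e' ↔ econd G e' e := by
  obtain ⟨⟨x, y⟩, he⟩ := e
  obtain ⟨⟨u, v⟩, he'⟩ := e'
  simp only [econd, Sym2.mem_iff, ne_eq]
  constructor <;> rintro ⟨h1, h2⟩ <;> refine ⟨fun h => h1 h.symm, ?_⟩ <;> tauto

def Srow (G : SimpleGraph V) [DecidableEq V] (e : OrientedEdge G) : Set (OrientedEdge G) :=
  {e' | econd G e e'}

lemma fiber_finite (s : Sym2 V) : {e' : OrientedEdge G | Sym2.mk e'.1.1 e'.1.2 = s}.Finite := by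
  induction s using Sym2.ind with
  | _ a b =>
    have hsub : {e' : OrientedEdge G | Sym2.mk e'.1.1 e'.1.2 = s(a, b)} ⊆
        Subtype.val ⁻¹' {((a, b) : V × V), (b, a)} := by
      rintro ⟨⟨u, v⟩, h⟩ hm
      change Sym2.mk u v = s(a, b) at hm
      rw [Sym2.eq_iff] at hm
      change ((u, v) : V × V) ∈ ({((a, b) : V × V), (b, a)} : Set (V × V))
      simp only [Set.mem_preimage, Set.mem_insert_iff, Set.mem_singleton_iff, Prod.mk.injEq]
      tauto
    exact (((Set.finite_singleton _).insert _).preimage Subtype.val_injective.injOn).subset hsub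

lemma fiber_ncard (s : Sym2 V) : {e' : OrientedEdge G | Sym2.mk e'.1.1 e'.1.2 = s}.ncard ≤ 2 := by
  induction s using Sym2.ind with
  | _ a b =>
    have hsub : ∀ e' ∈ {e' : OrientedEdge G | Sym2.mk e'.1.1 e'.1.2 = s(a, b)},
        (e'.1 ∈ ({((a, b) : V × V), (b, a)} : Set (V × V))) := by
      rintro ⟨⟨u, v⟩, h⟩ hm
      change Sym2.mk u v = s(a, b) at hm
      rw [Sym2.eq_iff] at hm
      simp only [Set.mem_insert_iff, Set.mem_singleton_iff, Prod.mk.injEq]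
      tauto
    calc {e' : OrientedEdge G | Sym2.mk e'.1.1 e'.1.2 = s(a, b)}.ncard
        ≤ ({((a, b) : V × V), (b, a)} : Set (V × V)).ncard :=
          Set.ncard_le_ncard_of_injOn Subtype.val hsub Subtype.val_injective.injOn
            ((Set.finite_singleton _).insert _)
      _ ≤ 2 := by
          refine (Set.ncard_insert_le _ _).trans ?_
          simp

lemma row_bound {N : Set (Sym2 V)} (hNfin : N.Finite) {e : OrientedEdge G}
    (hsub : ∀ e' ∈ Srow G e, Sym2.mk e'.1.1 e'.1.2 ∈ N) :
    (Srow G e).Finite ∧ ((Srow G e).ncard : ℝ) ≤ 2 * N.ncard := by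
  classical
  set U : Finset (OrientedEdge G) :=
    hNfin.toFinset.biUnion (fun s => (fiber_finite (G := G) s).toFinset) with hU
  have hSU : Srow G e ⊆ ↑U := by
    intro e' he'
    simp only [hU, Finset.coe_biUnion, Set.mem_iUnion, Finset.mem_coe, Set.Finite.mem_toFinset]
    exact ⟨Sym2.mk e'.1.1 e'.1.2, hsub e' he', rfl⟩
  have hfin : (Srow G e).Finite := U.finite_toSet.subset hSU
  refine ⟨hfin, ?_⟩
  have h1 : (Srow G e).ncard ≤ U.card := by
    simpa using Set.ncard_le_ncard hSU U.finite_toSet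
  have h2 : U.card ≤ ∑ s ∈ hNfin.toFinset, ((fiber_finite (G := G) s).toFinset).card :=
    Finset.card_biUnion_le
  have h3 : ∑ s ∈ hNfin.toFinset, ((fiber_finite (G := G) s).toFinset).card
      ≤ ∑ _s ∈ hNfin.toFinset, 2 := by
    refine Finset.sum_le_sum fun s _ => ?_
    rw [← Set.ncard_eq_toFinset_card _ (fiber_finite s)]
    exact fiber_ncard s
  have h4 : (Srow G e).ncard ≤ 2 * N.ncard := by
    have := h1.trans (h2.trans h3)
    rw [Set.ncard_eq_toFinset_card _ hNfin]
    simpa [Finset.sum_const, mul_comm] using this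
  exact_mod_cast h4

end

section core
variable {ι : Type*}

private lemma mul_le_sq_add_sq (a b : ℝ) (ha : 0 ≤ a) (hb : 0 ≤ b) : a * b ≤ a ^ 2 + b ^ 2 := by
  nlinarith [sq_nonneg (a - b)]

theorem core_exists_op (S : ι → Set ι) (hfin : ∀ i, (S i).Finite)
    (hsymm : ∀ i j, j ∈ S i ↔ i ∈ S j) (c : ℝ) (hc : 0 ≤ c)
    (hcard : ∀ i, ((S i).ncard : ℝ) ≤ c) :
    ∃ A : lp (fun _ : ι => ℂ) 2 →L[ℂ] lp (fun _ : ι => ℂ) 2,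
      (∀ f : lp (fun _ : ι => ℂ) 2, ∀ i, A f i = ∑ j ∈ (hfin i).toFinset, f j) ∧
      ‖A‖ ≤ c ∧
      ∀ f g : lp (fun _ : ι => ℂ) 2, ⟪A f, g⟫_ℂ = ⟪f, A g⟫_ℂ := by
  classical
  set cN : ℝ≥0∞ := ENNReal.ofReal c with hcN
  have hcN_ne : cN ≠ ⊤ := ENNReal.ofReal_ne_top
  have hcardR : ∀ i, (((hfin i).toFinset.card : ℝ)) ≤ c := by
    intro i
    rw [← Set.ncard_eq_toFinset_card _ (hfin i)]
    exact hcard i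
  have hcardE : ∀ i, (((hfin i).toFinset.card : ℝ≥0∞)) ≤ cN := by
    intro i
    rw [hcN, ← ENNReal.ofReal_natCast]
    exact ENNReal.ofReal_le_ofReal (hcardR i)
  -- boole kernel
  set K : ι → ι → ℝ≥0∞ := fun i j => if j ∈ S i then 1 else 0 with hK
  have hrow : ∀ (F : ι → ℝ≥0∞) i, ∑' j, K i j * F j = ∑ j ∈ (hfin i).toFinset, F j := by
    intro F i
    rw [tsum_eq_sum (s := (hfin i).toFinset) ?_]
    · refine Finset.sum_congr rfl fun j hj => ?_
      simp only [hK]; rw [if_pos ((hfin i).mem_toFinset.mp hj), one_mul]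
    · intro j hj
      simp only [hK]; rw [if_neg (fun h => hj ((hfin i).mem_toFinset.mpr h)), zero_mul]
  have hcol : ∀ j, ∑' i, K i j ≤ cN := by
    intro j
    have : ∑' i, K i j = ∑ i ∈ (hfin j).toFinset, K i j := by
      refine tsum_eq_sum fun i hi => ?_
      simp only [hK]
      exact if_neg (fun h => hi ((hfin j).mem_toFinset.mpr ((hsymm i j).mp h)))
    rw [this]
    calc ∑ i ∈ (hfin j).toFinset, K i j ≤ ∑ _i ∈ (hfin j).toFinset, 1 := by
          refine Finset.sum_le_sum fun i _ => ?_
          simp only [hK]; split <;> simp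
      _ = ((hfin j).toFinset.card : ℝ≥0∞) := by simp
      _ ≤ cN := hcardE j
  -- swap bound
  have hswap : ∀ F : ι → ℝ≥0∞, ∑' i, ∑ j ∈ (hfin i).toFinset, F j ≤ cN * ∑' j, F j := by
    intro F
    calc ∑' i, ∑ j ∈ (hfin i).toFinset, F j = ∑' i, ∑' j, K i j * F j := by
          simp_rw [hrow]
      _ = ∑' j, ∑' i, K i j * F j := ENNReal.tsum_comm
      _ = ∑' j, (∑' i, K i j) * F j := by simp_rw [ENNReal.tsum_mul_right]
      _ ≤ ∑' j, cN * F j := ENNReal.tsum_le_tsum fun j =>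
          mul_le_mul_left (hcol j) _
      _ = cN * ∑' j, F j := ENNReal.tsum_mul_left
  -- pointwise Cauchy-Schwarz
  have hpt : ∀ (f : ι → ℂ) (i : ι),
      ‖∑ j ∈ (hfin i).toFinset, f j‖ ^ 2 ≤ c * ∑ j ∈ (hfin i).toFinset, ‖f j‖ ^ 2 := by
    intro f i
    calc ‖∑ j ∈ (hfin i).toFinset, f j‖ ^ 2
        ≤ (∑ j ∈ (hfin i).toFinset, ‖f j‖) ^ 2 := by
          exact pow_le_pow_left₀ (norm_nonneg _) (norm_sum_le _ _) 2
      _ ≤ ((hfin i).toFinset.card : ℝ) * ∑ j ∈ (hfin i).toFinset, ‖f j‖ ^ 2 :=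
          sq_sum_le_card_mul_sum_sq
      _ ≤ c * ∑ j ∈ (hfin i).toFinset, ‖f j‖ ^ 2 := by
          refine mul_le_mul_of_nonneg_right (hcardR i) ?_
          exact Finset.sum_nonneg fun j _ => sq_nonneg _
  have hptE : ∀ (f : ι → ℂ) (i : ι),
      (‖∑ j ∈ (hfin i).toFinset, f j‖₊ : ℝ≥0∞) ^ 2
        ≤ cN * ∑ j ∈ (hfin i).toFinset, (‖f j‖₊ : ℝ≥0∞) ^ 2 := by
    intro f i
    have h1 : (‖∑ j ∈ (hfin i).toFinset, f j‖₊ : ℝ≥0∞) ^ 2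
        = ENNReal.ofReal (‖∑ j ∈ (hfin i).toFinset, f j‖ ^ 2) := by
      rw [ENNReal.ofReal_pow (norm_nonneg _), ofReal_norm, enorm_eq_nnnorm]
    have h2 : cN * ∑ j ∈ (hfin i).toFinset, (‖f j‖₊ : ℝ≥0∞) ^ 2
        = ENNReal.ofReal (c * ∑ j ∈ (hfin i).toFinset, ‖f j‖ ^ 2) := by
      rw [ENNReal.ofReal_mul hc, ENNReal.ofReal_sum_of_nonneg (fun j _ => sq_nonneg _)]
      congr 1
      refine Finset.sum_congr rfl fun j _ => ?_
      rw [ENNReal.ofReal_pow (norm_nonneg _), ofReal_norm, enorm_eq_nnnorm]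
    rw [h1, h2]
    exact ENNReal.ofReal_le_ofReal (hpt f i)
  -- master bound
  have hmaster : ∀ f : ι → ℂ,
      ∑' i, (‖∑ j ∈ (hfin i).toFinset, f j‖₊ : ℝ≥0∞) ^ 2
        ≤ cN ^ 2 * ∑' j, (‖f j‖₊ : ℝ≥0∞) ^ 2 := by
    intro f
    calc ∑' i, (‖∑ j ∈ (hfin i).toFinset, f j‖₊ : ℝ≥0∞) ^ 2
        ≤ ∑' i, cN * ∑ j ∈ (hfin i).toFinset, (‖f j‖₊ : ℝ≥0∞) ^ 2 :=
          ENNReal.tsum_le_tsum (hptE f)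
      _ = cN * ∑' i, ∑ j ∈ (hfin i).toFinset, (‖f j‖₊ : ℝ≥0∞) ^ 2 := ENNReal.tsum_mul_left
      _ ≤ cN * (cN * ∑' j, (‖f j‖₊ : ℝ≥0∞) ^ 2) :=
          mul_le_mul_right (hswap _) _
      _ = cN ^ 2 * ∑' j, (‖f j‖₊ : ℝ≥0∞) ^ 2 := by ring
  -- total of an lp function
  have htotal : ∀ f : lp (fun _ : ι => ℂ) 2,
      ∑' j, (‖f j‖₊ : ℝ≥0∞) ^ 2 = ENNReal.ofReal (‖f‖ ^ 2) := by
    intro f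
    have hsq : ‖f‖ ^ 2 = ∑' j, ‖f j‖ ^ 2 := by
      have := lp.norm_rpow_eq_tsum (p := 2) (by norm_num) f
      simpa [ENNReal.toReal_ofNat, Real.rpow_natCast] using this
    have hsum : Summable fun j => ‖f j‖ ^ 2 := by
      have := (lp.memℓp f).summable (p := 2) (by norm_num)
      simpa [ENNReal.toReal_ofNat, Real.rpow_natCast] using this
    rw [hsq, ENNReal.ofReal_tsum_of_nonneg (fun j => sq_nonneg _) hsum]
    refine tsum_congr fun j => ?_
    rw [ENNReal.ofReal_pow (norm_nonneg _), ofReal_norm, enorm_eq_nnnorm]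
  -- summability of the squares of the image
  have hsummable_sq : ∀ f : lp (fun _ : ι => ℂ) 2,
      Summable (fun i => ‖∑ j ∈ (hfin i).toFinset, f j‖ ^ 2) := by
    intro f
    have hne : (∑' i, ((‖∑ j ∈ (hfin i).toFinset, f j‖₊ ^ 2 : ℝ≥0) : ℝ≥0∞)) ≠ ⊤ := by
      have heq : (∑' i, ((‖∑ j ∈ (hfin i).toFinset, f j‖₊ ^ 2 : ℝ≥0) : ℝ≥0∞))
          = ∑' i, (‖∑ j ∈ (hfin i).toFinset, f j‖₊ : ℝ≥0∞) ^ 2 := by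
        refine tsum_congr fun i => ?_
        push_cast
        ring
      rw [heq]
      refine ne_top_of_le_ne_top ?_ ((hmaster (fun j => f j)).trans_eq (by rw [htotal f]))
      exact ENNReal.mul_ne_top (ENNReal.pow_ne_top hcN_ne) ENNReal.ofReal_ne_top
    have hs : Summable (fun i => (‖∑ j ∈ (hfin i).toFinset, f j‖₊ ^ 2 : ℝ≥0)) :=
      ENNReal.tsum_coe_ne_top_iff_summable.mp hne
    have := NNReal.summable_coe.mpr hs
    refine this.congr fun i => ?_
    push_cast
    ring
  have hmem : ∀ f : lp (fun _ : ι => ℂ) 2,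
      Memℓp (fun i => ∑ j ∈ (hfin i).toFinset, f j) 2 := by
    intro f
    apply memℓp_gen
    simpa [ENNReal.toReal_ofNat, Real.rpow_natCast] using hsummable_sq f
  -- the linear map
  set A0 : lp (fun _ : ι => ℂ) 2 →ₗ[ℂ] lp (fun _ : ι => ℂ) 2 :=
    { toFun := fun f => ⟨fun i => ∑ j ∈ (hfin i).toFinset, f j, hmem f⟩
      map_add' := fun f g => by
        ext i
        simp only [lp.coeFn_add, Pi.add_apply]
        exact Finset.sum_add_distrib
      map_smul' := fun m f => by
        ext i
        simp only [lp.coeFn_smul, Pi.smul_apply, smul_eq_mul, RingHom.id_apply]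
        exact (Finset.mul_sum _ _ _).symm } with hA0
  have hA0app : ∀ (f : lp (fun _ : ι => ℂ) 2) (i : ι),
      A0 f i = ∑ j ∈ (hfin i).toFinset, f j := fun f i => rfl
  -- norm bound
  have hnorm : ∀ f : lp (fun _ : ι => ℂ) 2, ‖A0 f‖ ≤ c * ‖f‖ := by
    intro f
    have h1 : ‖A0 f‖ ^ 2 = ∑' i, ‖∑ j ∈ (hfin i).toFinset, f j‖ ^ 2 := by
      have := lp.norm_rpow_eq_tsum (p := 2) (by norm_num) (A0 f)
      simpa [hA0app, ENNReal.toReal_ofNat, Real.rpow_natCast] using this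
    have hL : ∑' i, ‖∑ j ∈ (hfin i).toFinset, f j‖ ^ 2
        = (∑' i, (‖∑ j ∈ (hfin i).toFinset, f j‖₊ : ℝ≥0∞) ^ 2).toReal := by
      rw [ENNReal.tsum_toReal_eq
        (fun i => ENNReal.pow_ne_top ENNReal.coe_ne_top)]
      refine (tsum_congr fun i => ?_).symm
      rw [ENNReal.toReal_pow]
      simp
    have hm := (hmaster (fun j => f j)).trans_eq (by rw [htotal f])
    have h2 : ∑' i, ‖∑ j ∈ (hfin i).toFinset, f j‖ ^ 2 ≤ c ^ 2 * ‖f‖ ^ 2 := by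
      rw [hL]
      calc (∑' i, (‖∑ j ∈ (hfin i).toFinset, f j‖₊ : ℝ≥0∞) ^ 2).toReal
          ≤ (cN ^ 2 * ENNReal.ofReal (‖f‖ ^ 2)).toReal :=
            ENNReal.toReal_mono
              (ENNReal.mul_ne_top (ENNReal.pow_ne_top hcN_ne) ENNReal.ofReal_ne_top) hm
        _ = c ^ 2 * ‖f‖ ^ 2 := by
            rw [ENNReal.toReal_mul, ENNReal.toReal_pow, hcN, ENNReal.toReal_ofReal hc,
              ENNReal.toReal_ofReal (sq_nonneg _)]
    have h3 : ‖A0 f‖ ^ 2 ≤ (c * ‖f‖) ^ 2 := by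
      rw [h1, mul_pow]; exact h2
    have h4 := Real.sqrt_le_sqrt h3
    rwa [Real.sqrt_sq (norm_nonneg _), Real.sqrt_sq (mul_nonneg hc (norm_nonneg _))] at h4
  refine ⟨A0.mkContinuous c hnorm, fun f i => rfl, A0.mkContinuous_norm_le hc hnorm, ?_⟩
  -- symmetry
  intro f g
  have happ : ∀ (h : lp (fun _ : ι => ℂ) 2) (i : ι),
      (A0.mkContinuous c hnorm) h i = ∑ j ∈ (hfin i).toFinset, h j := fun h i => rfl
  set t : ι → ι → ℂ :=
    fun i j => (if j ∈ S i then (1 : ℂ) else 0) * (conj (f j) * g i) with ht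
  have hrowsum : ∀ i, Summable (t i) := by
    intro i
    refine summable_of_ne_finset_zero (s := (hfin i).toFinset) fun j hj => ?_
    simp only [ht]
    rw [if_neg (fun h => hj ((hfin i).mem_toFinset.mpr h)), zero_mul]
  have hcolsum : ∀ j, Summable (fun i => t i j) := by
    intro j
    refine summable_of_ne_finset_zero (s := (hfin j).toFinset) fun i hi => ?_
    simp only [ht]
    rw [if_neg (fun h => hi ((hfin j).mem_toFinset.mpr ((hsymm i j).mp h))), zero_mul]
  have hU : Summable (Function.uncurry t) := by
    refine Summable.of_nnnorm ?_
    rw [← ENNReal.tsum_coe_ne_top_iff_summable]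
    have hbd : ∀ p : ι × ι, (‖Function.uncurry t p‖₊ : ℝ≥0∞)
        ≤ K p.1 p.2 * ((‖f p.2‖₊ : ℝ≥0∞) ^ 2 + (‖g p.1‖₊ : ℝ≥0∞) ^ 2) := by
      rintro ⟨i, j⟩
      simp only [Function.uncurry, ht, hK]
      by_cases h : j ∈ S i
      · rw [if_pos h, if_pos h, one_mul, one_mul]
        rw [← enorm_eq_nnnorm, ← ofReal_norm]
        have h1 : ‖conj (f j) * g i‖ ≤ ‖f j‖ ^ 2 + ‖g i‖ ^ 2 := by
          rw [norm_mul, RCLike.norm_conj]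
          exact mul_le_sq_add_sq _ _ (norm_nonneg _) (norm_nonneg _)
        refine (ENNReal.ofReal_le_ofReal h1).trans_eq ?_
        rw [ENNReal.ofReal_add (sq_nonneg _) (sq_nonneg _),
          ENNReal.ofReal_pow (norm_nonneg _), ENNReal.ofReal_pow (norm_nonneg _),
          ofReal_norm, enorm_eq_nnnorm, ofReal_norm, enorm_eq_nnnorm]
      · rw [if_neg h, if_neg h, zero_mul, zero_mul]
        simp
    refine ne_top_of_le_ne_top ?_ (ENNReal.tsum_le_tsum hbd)
    rw [ENNReal.tsum_prod']
    have hle : ∑' i, ∑' j, K i j * ((‖f j‖₊ : ℝ≥0∞) ^ 2 + (‖g i‖₊ : ℝ≥0∞) ^ 2)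
        ≤ cN * (∑' j, (‖f j‖₊ : ℝ≥0∞) ^ 2) + cN * ∑' i, (‖g i‖₊ : ℝ≥0∞) ^ 2 := by
      have hsplit : ∀ i, ∑' j, K i j * ((‖f j‖₊ : ℝ≥0∞) ^ 2 + (‖g i‖₊ : ℝ≥0∞) ^ 2)
          = (∑' j, K i j * (‖f j‖₊ : ℝ≥0∞) ^ 2) + (∑' j, K i j) * (‖g i‖₊ : ℝ≥0∞) ^ 2 := by
        intro i
        rw [← ENNReal.tsum_mul_right, ← ENNReal.tsum_add]
        exact tsum_congr fun j => by ring
      calc ∑' i, ∑' j, K i j * ((‖f j‖₊ : ℝ≥0∞) ^ 2 + (‖g i‖₊ : ℝ≥0∞) ^ 2)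
          = (∑' i, ∑' j, K i j * (‖f j‖₊ : ℝ≥0∞) ^ 2)
              + ∑' i, (∑' j, K i j) * (‖g i‖₊ : ℝ≥0∞) ^ 2 := by
            rw [← ENNReal.tsum_add]
            exact tsum_congr hsplit
        _ ≤ cN * (∑' j, (‖f j‖₊ : ℝ≥0∞) ^ 2) + cN * ∑' i, (‖g i‖₊ : ℝ≥0∞) ^ 2 := by
            refine add_le_add ?_ ?_
            · calc ∑' i, ∑' j, K i j * (‖f j‖₊ : ℝ≥0∞) ^ 2
                  = ∑' i, ∑ j ∈ (hfin i).toFinset, (‖f j‖₊ : ℝ≥0∞) ^ 2 := by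
                    exact tsum_congr fun i => hrow _ i
                _ ≤ cN * ∑' j, (‖f j‖₊ : ℝ≥0∞) ^ 2 := hswap _
            · rw [← ENNReal.tsum_mul_left]
              refine ENNReal.tsum_le_tsum fun i => ?_
              refine mul_le_mul_left ?_ _
              have : ∑' j, K i j = ∑ j ∈ (hfin i).toFinset, (1 : ℝ≥0∞) := by
                have := hrow (fun _ => (1 : ℝ≥0∞)) i
                simpa using this
              rw [this]
              simpa using hcardE i
    refine ne_top_of_le_ne_top ?_ hle
    rw [htotal f, htotal g]
    exact ENNReal.add_ne_top.mpr
      ⟨ENNReal.mul_ne_top hcN_ne ENNReal.ofReal_ne_top,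
       ENNReal.mul_ne_top hcN_ne ENNReal.ofReal_ne_top⟩
  have hAfg : ⟪(A0.mkContinuous c hnorm) f, g⟫_ℂ = ∑' i, ∑' j, t i j := by
    rw [lp.inner_eq_tsum]
    refine tsum_congr fun i => ?_
    rw [RCLike.inner_apply', happ f i]
    have h1 : (starRingEnd ℂ) (∑ j ∈ (hfin i).toFinset, f j) * g i
        = ∑ j ∈ (hfin i).toFinset, conj (f j) * g i := by
      rw [map_sum, Finset.sum_mul]
    rw [h1]
    refine (((tsum_eq_sum (s := (hfin i).toFinset) (f := t i)
        fun j hj => ?_).trans ?_)).symm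
    · simp only [ht]
      rw [if_neg (fun h => hj ((hfin i).mem_toFinset.mpr h)), zero_mul]
    · refine Finset.sum_congr rfl fun j hj => ?_
      simp only [ht]
      rw [if_pos ((hfin i).mem_toFinset.mp hj), one_mul]
  have hfAg : ⟪f, (A0.mkContinuous c hnorm) g⟫_ℂ = ∑' j, ∑' i, t i j := by
    rw [lp.inner_eq_tsum]
    refine tsum_congr fun j => ?_
    rw [RCLike.inner_apply', happ g j]
    have h1 : (starRingEnd ℂ) (f j) * (∑ i ∈ (hfin j).toFinset, g i)
        = ∑ i ∈ (hfin j).toFinset, conj (f j) * g i := Finset.mul_sum ..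
    rw [h1]
    refine (((tsum_eq_sum (s := (hfin j).toFinset) (f := fun i => t i j)
        fun i hi => ?_).trans ?_)).symm
    · simp only [ht]
      rw [if_neg (fun h => hi ((hfin j).mem_toFinset.mpr ((hsymm i j).mp h))), zero_mul]
    · refine Finset.sum_congr rfl fun i hi => ?_
      simp only [ht]
      rw [if_pos ((hsymm i j).mpr ((hfin j).mem_toFinset.mp hi)), one_mul]
  rw [hAfg, hfAg]
  exact (Summable.tsum_comm' hU hrowsum hcolsum).symm

end core

/-- **Bound on the unnormalized edge Laplacian block (Proposition 6.1(1)).** -/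
theorem unnormalized_edge_laplacian_bound
    (V : Type*) [Countable V] [DecidableEq V]
    (G : SimpleGraph V) (hlf : G.LocallyFinite)
    (DL : ℝ) (hDL : 0 ≤ DL)
    (hdeg : ∀ e ∈ G.edgeSet,
      {e' : Sym2 V | e' ∈ G.edgeSet ∧ e' ≠ e ∧ ∃ v : V, v ∈ e ∧ v ∈ e'}.Finite ∧
      ({e' : Sym2 V | e' ∈ G.edgeSet ∧ e' ≠ e ∧ ∃ v : V, v ∈ e ∧ v ∈ e'}.ncard : ℝ) ≤ DL) :
    ∃ B : lp (fun _ : OrientedEdge G => ℂ) 2 →L[ℂ] lp (fun _ : OrientedEdge G => ℂ) 2,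
      (∀ f : lp (fun _ : OrientedEdge G => ℂ) 2, ∀ e : OrientedEdge G,
        B f e = 2 * f e + ∑' e' : OrientedEdge G,
          (if Sym2.mk e'.1.1 e'.1.2 ≠ Sym2.mk e.1.1 e.1.2 ∧
              (e.1.1 ∈ Sym2.mk e'.1.1 e'.1.2 ∨ e.1.2 ∈ Sym2.mk e'.1.1 e'.1.2) then (1 : ℂ) else 0) * f e') ∧
      ‖B‖ ≤ 2 * DL + 2 ∧
      (∀ f g : lp (fun _ : OrientedEdge G => ℂ) 2, ⟪B f, g⟫_ℂ = ⟪f, B g⟫_ℂ) := by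
  classical
  -- the row bound
  have hrow : ∀ e : OrientedEdge G,
      (Srow G e).Finite ∧ ((Srow G e).ncard : ℝ) ≤ 2 * DL := by
    intro e
    have hemem : Sym2.mk e.1.1 e.1.2 ∈ G.edgeSet := G.mem_edgeSet.mpr e.2
    obtain ⟨hNfin, hNcard⟩ := hdeg (Sym2.mk e.1.1 e.1.2) hemem
    have hsub : ∀ e' ∈ Srow G e, Sym2.mk e'.1.1 e'.1.2 ∈
        {e'' : Sym2 V | e'' ∈ G.edgeSet ∧ e'' ≠ Sym2.mk e.1.1 e.1.2 ∧
          ∃ v : V, v ∈ Sym2.mk e.1.1 e.1.2 ∧ v ∈ e''} := by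
      rintro e' ⟨hne, hor⟩
      refine ⟨G.mem_edgeSet.mpr e'.2, hne, ?_⟩
      rcases hor with h | h
      · exact ⟨e.1.1, Sym2.mem_mk_left _ _, h⟩
      · exact ⟨e.1.2, Sym2.mem_mk_right _ _, h⟩
    obtain ⟨hfin, hcard⟩ := row_bound hNfin hsub
    exact ⟨hfin, hcard.trans (by nlinarith)⟩
  have hfin : ∀ e : OrientedEdge G, (Srow G e).Finite := fun e => (hrow e).1
  have hsymm : ∀ e e' : OrientedEdge G, e' ∈ Srow G e ↔ e ∈ Srow G e' := fun e e' =>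
    econd_symm e e'
  obtain ⟨A, hAspec, hAnorm, hAsym⟩ :=
    core_exists_op (Srow G) hfin hsymm (2 * DL) (by linarith) (fun e => (hrow e).2)
  set I2 : lp (fun _ : OrientedEdge G => ℂ) 2 →L[ℂ] lp (fun _ : OrientedEdge G => ℂ) 2 :=
    ContinuousLinearMap.id ℂ (lp (fun _ : OrientedEdge G => ℂ) 2) with hI2
  refine ⟨(2 : ℂ) • I2 + A, ?_, ?_, ?_⟩
  · intro f e
    have h1 : ((2 : ℂ) • I2 + A) f e = 2 * f e + A f e := by
      rw [ContinuousLinearMap.add_apply, ContinuousLinearMap.smul_apply, hI2,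
        ContinuousLinearMap.id_apply]
      rw [lp.coeFn_add, Pi.add_apply, lp.coeFn_smul, Pi.smul_apply, smul_eq_mul]
    rw [h1, hAspec f e]
    congr 1
    refine (((tsum_eq_sum (s := (hfin e).toFinset)
        (f := fun e' : OrientedEdge G =>
          (if Sym2.mk e'.1.1 e'.1.2 ≠ Sym2.mk e.1.1 e.1.2 ∧ (e.1.1 ∈ Sym2.mk e'.1.1 e'.1.2 ∨ e.1.2 ∈ Sym2.mk e'.1.1 e'.1.2)
            then (1 : ℂ) else 0) * f e')
        fun e' he' => ?_).trans ?_)).symm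
    · show (if Sym2.mk e'.1.1 e'.1.2 ≠ Sym2.mk e.1.1 e.1.2 ∧ (e.1.1 ∈ Sym2.mk e'.1.1 e'.1.2 ∨ e.1.2 ∈ Sym2.mk e'.1.1 e'.1.2)
          then (1 : ℂ) else 0) * f e' = 0
      rw [if_neg, zero_mul]
      exact fun h => he' ((hfin e).mem_toFinset.mpr h)
    · refine Finset.sum_congr rfl fun e' he' => ?_
      have hc : Sym2.mk e'.1.1 e'.1.2 ≠ Sym2.mk e.1.1 e.1.2 ∧ (e.1.1 ∈ Sym2.mk e'.1.1 e'.1.2 ∨ e.1.2 ∈ Sym2.mk e'.1.1 e'.1.2) :=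
        (hfin e).mem_toFinset.mp he'
      rw [if_pos hc, one_mul]
  · calc ‖(2 : ℂ) • I2 + A‖ ≤ ‖(2 : ℂ) • I2‖ + ‖A‖ := norm_add_le _ _
      _ ≤ 2 + 2 * DL := by
          refine add_le_add ?_ hAnorm
          refine le_trans (ContinuousLinearMap.opNorm_smul_le _ _) ?_
          have h2 : ‖(2 : ℂ)‖ = 2 := by simp
          rw [h2, hI2]
          have h3 := ContinuousLinearMap.norm_id_le
            (𝕜 := ℂ) (E := lp (fun _ : OrientedEdge G => ℂ) 2)
          nlinarith [norm_nonneg (ContinuousLinearMap.id ℂ (lp (fun _ : OrientedEdge G => ℂ) 2))]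
      _ = 2 * DL + 2 := by ring
  · intro f g
    rw [ContinuousLinearMap.add_apply, ContinuousLinearMap.add_apply,
      ContinuousLinearMap.smul_apply, ContinuousLinearMap.smul_apply, hI2,
      ContinuousLinearMap.id_apply, ContinuousLinearMap.id_apply,
      inner_add_left, inner_add_right, inner_smul_left, inner_smul_right, hAsym f g]
    have hconj : (starRingEnd ℂ) (2 : ℂ) = 2 := map_ofNat _ 2
    rw [hconj]
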